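/- The K-linear span of the polynomials (X + ι(a)·Y)^r in K[X,Y], as a ranges over all elements of 𝔽, equals W, the span of the monomials X^i Y^{r−i} for admissible i. -/
import Mathlib

open MvPolynomial Finset


lemma aux_lucas (p : ℕ) (hp : p.Prime) {n r i : ℕ} (hr : r < p ^ n) (hi : i ≤ r) :
    p ∣ r.choose i ↔ ¬ (∀ j : ℕ, i / p ^ j % p ≤ r / p ^ j % p) := by
  haveI : Fact p.Prime := ⟨hp⟩
  have hin : i < p ^ n := lt_of_le_of_lt hi hr
  have lucas := Choose.lucas_theorem_nat (p := p) hr hin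
  have hdvd : p ∣ r.choose i ↔ p ∣ ∏ j ∈ range n, (r / p ^ j % p).choose (i / p ^ j % p) := by
    rw [← Nat.modEq_zero_iff_dvd, ← Nat.modEq_zero_iff_dvd]
    exact ⟨fun h => lucas.symm.trans h, fun h => lucas.trans h⟩
  rw [hdvd, Nat.Prime.prime hp |>.dvd_finset_prod_iff]
  constructor
  · rintro ⟨j, -, hj⟩
    intro hall
    have h1 : (i / p ^ j % p) ≤ (r / p ^ j % p) := hall j
    have h2 : ¬ p ∣ (r / p ^ j % p).choose (i / p ^ j % p) := by
      intro hd
      have hfac : (r / p ^ j % p).choose (i / p ^ j % p) ∣ (r / p ^ j % p).factorial :=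
        ⟨(i / p ^ j % p).factorial * ((r / p ^ j % p) - (i / p ^ j % p)).factorial, by
          rw [← Nat.choose_mul_factorial_mul_factorial h1, mul_assoc]⟩
      have := (Nat.Prime.dvd_factorial hp).mp (hd.trans hfac)
      have := Nat.mod_lt (r / p ^ j) hp.pos
      omega
    exact h2 hj
  · intro h
    push_neg at h
    obtain ⟨j, hj⟩ := h
    refine ⟨j, ?_, ?_⟩
    · rw [mem_range]
      by_contra hjn
      push_neg at hjn
      have : i / p ^ j = 0 := Nat.div_eq_of_lt (lt_of_lt_of_le hin (Nat.pow_le_pow_right hp.pos hjn))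
      simp [this] at hj
    · rw [Nat.choose_eq_zero_of_lt (by omega)]
      exact dvd_zero p


lemma aux_psum_zero (𝔽 : Type*) [Field 𝔽] [Fintype 𝔽] {m : ℕ} (_hm : 0 < m)
    (hm2 : m < 2 * (Fintype.card 𝔽 - 1)) (hmq : m ≠ Fintype.card 𝔽 - 1) :
    ∑ a : 𝔽, a ^ m = 0 := by
  have hq2 : 2 ≤ Fintype.card 𝔽 := Fintype.one_lt_card
  rcases lt_or_gt_of_ne hmq with h | h
  · exact FiniteField.sum_pow_lt_card_sub_one 𝔽 m h
  · have hmge : Fintype.card 𝔽 ≤ m := by omega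
    have h1 : ∀ a : 𝔽, a ^ m = a ^ (m - Fintype.card 𝔽 + 1) := by
      intro a
      conv_lhs => rw [show m = (m - Fintype.card 𝔽) + Fintype.card 𝔽 by omega, pow_add,
        FiniteField.pow_card, ← pow_succ]
    rw [Finset.sum_congr rfl fun a _ => h1 a]
    exact FiniteField.sum_pow_lt_card_sub_one 𝔽 (m - Fintype.card 𝔽 + 1) (by omega)

lemma aux_psum_top (𝔽 : Type*) [Field 𝔽] [Fintype 𝔽] :
    ∑ a : 𝔽, a ^ (Fintype.card 𝔽 - 1) = -1 := by
  classical
  have hq2 : 2 ≤ Fintype.card 𝔽 := Fintype.one_lt_card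
  have h : ∀ a : 𝔽, a ^ (Fintype.card 𝔽 - 1) = if a = 0 then 0 else 1 := by
    intro a
    split_ifs with ha
    · rw [ha]; exact zero_pow (by omega)
    · exact FiniteField.pow_card_sub_one_eq_one a ha
  rw [Finset.sum_congr rfl fun a _ => h a, Finset.sum_ite, Finset.sum_const,
    Finset.sum_const, smul_zero, zero_add]
  have hcard : (univ.filter (fun a : 𝔽 => ¬ a = 0)).card = Fintype.card 𝔽 - 1 := by
    have h1 : (univ.filter (fun a : 𝔽 => a = 0)).card = 1 := by
      rw [Finset.filter_eq' univ (0 : 𝔽), if_pos (mem_univ 0), Finset.card_singleton]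
    have h2 := Finset.card_filter_add_card_filter_not (s := (univ : Finset 𝔽))
      (p := fun a : 𝔽 => a = 0)
    rw [Finset.card_univ] at h2
    omega
  rw [hcard, nsmul_eq_mul, mul_one, Nat.cast_sub (by omega), FiniteField.cast_card_eq_zero,
    Nat.cast_one, zero_sub]


lemma aux_expand {K : Type*} [CommRing K] (c : K) (r : ℕ) :
    (X 0 + C c * X 1 : MvPolynomial (Fin 2) K) ^ r =
      ∑ k ∈ Finset.range (r + 1),
        (c ^ (r - k) * (r.choose k : K)) • (X 0 ^ k * X 1 ^ (r - k)) := by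
  rw [add_pow]
  refine Finset.sum_congr rfl fun k hk => ?_
  rw [MvPolynomial.smul_eq_C_mul, map_mul, mul_pow, ← C_pow, ← C_eq_coe_nat]
  ring
theorem stmt_6
    (p : ℕ) (hp : p.Prime) (n : ℕ) (hn : 1 ≤ n)
    (𝔽 : Type*) [Field 𝔽] [Fintype 𝔽] (hF : Fintype.card 𝔽 = p ^ n)
    (K : Type*) [Field K] [CharP K p]
    (ι : 𝔽 →+* K)
    (r : ℕ) (hr : r < p ^ n) :
    Submodule.span K
        {P : MvPolynomial (Fin 2) K |
          ∃ a : 𝔽, P = (X 0 + MvPolynomial.C (ι a) * X 1) ^ r} =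
      Submodule.span K
        {P : MvPolynomial (Fin 2) K |
          ∃ i : ℕ, i ≤ r ∧ (∀ j : ℕ, i / p ^ j % p ≤ r / p ^ j % p) ∧
            P = X 0 ^ i * X 1 ^ (r - i)} := by
  haveI : Fact p.Prime := ⟨hp⟩
  have hq2 : 2 ≤ p ^ n := by
    calc 2 ≤ p := hp.two_le
    _ ≤ p ^ n := Nat.le_self_pow (by omega) p
  apply le_antisymm
  · rw [Submodule.span_le]
    rintro P ⟨a, rfl⟩
    rw [aux_expand]
    refine Submodule.sum_mem _ fun k hk => ?_
    rw [Finset.mem_range] at hk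
    have hk' : k ≤ r := by omega
    by_cases h : (r.choose k : K) = 0
    · rw [h, mul_zero, zero_smul]; exact zero_mem _
    · have hnd : ¬ p ∣ r.choose k := fun hd => h ((CharP.cast_eq_zero_iff K p _).mpr hd)
      have hall : ∀ j : ℕ, k / p ^ j % p ≤ r / p ^ j % p := by
        by_contra hcon
        exact hnd ((aux_lucas p hp hr hk').mpr hcon)
      exact Submodule.smul_mem _ _ (Submodule.subset_span ⟨k, hk', hall, rfl⟩)
  · rw [Submodule.span_le]
    rintro P ⟨i, hi, hadm, rfl⟩
    rcases hi.lt_or_eq with hilt | rfl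
    swap
    · have h0 : (X 0 ^ i * X 1 ^ (i - i) : MvPolynomial (Fin 2) K)
          = (X 0 + MvPolynomial.C (ι 0) * X 1) ^ i := by simp
      exact Submodule.subset_span ⟨0, h0⟩
    · have hchoose : (r.choose i : K) ≠ 0 := fun h0 =>
        (aux_lucas p hp hr hi).mp ((CharP.cast_eq_zero_iff K p _).mp h0) hadm
      set q := p ^ n with hqdef
      have hcard : Fintype.card 𝔽 = q := hF
      have key : ∑ a : 𝔽, (ι a) ^ (q - 1 - (r - i)) •
            ((X 0 + MvPolynomial.C (ι a) * X 1 : MvPolynomial (Fin 2) K) ^ r)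
          = (-(r.choose i : K)) • (X 0 ^ i * X 1 ^ (r - i) : MvPolynomial (Fin 2) K) := by
        have step1 : ∀ a : 𝔽, (ι a) ^ (q - 1 - (r - i)) •
              ((X 0 + MvPolynomial.C (ι a) * X 1 : MvPolynomial (Fin 2) K) ^ r)
            = ∑ k ∈ Finset.range (r + 1),
                ((ι a) ^ (q - 1 - (r - i) + (r - k)) * (r.choose k : K)) •
                  (X 0 ^ k * X 1 ^ (r - k) : MvPolynomial (Fin 2) K) := by
          intro a
          rw [aux_expand, Finset.smul_sum]
          refine Finset.sum_congr rfl fun k hk => ?_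
          rw [smul_smul, pow_add, mul_assoc]
        rw [Finset.sum_congr rfl fun a _ => step1 a, Finset.sum_comm]
        have step2 : ∀ k ∈ Finset.range (r + 1),
            (∑ a : 𝔽, ((ι a) ^ (q - 1 - (r - i) + (r - k)) * (r.choose k : K)) •
                (X 0 ^ k * X 1 ^ (r - k) : MvPolynomial (Fin 2) K))
            = (if k = i then (-(r.choose i : K)) •
                (X 0 ^ i * X 1 ^ (r - i) : MvPolynomial (Fin 2) K) else 0) := by
          intro k hk
          rw [Finset.mem_range] at hk
          rw [← Finset.sum_smul, ← Finset.sum_mul]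
          have hsum : ∑ a : 𝔽, (ι a) ^ (q - 1 - (r - i) + (r - k))
              = if k = i then (-1 : K) else 0 := by
            have hmap : ∑ a : 𝔽, (ι a) ^ (q - 1 - (r - i) + (r - k))
                = ι (∑ a : 𝔽, a ^ (q - 1 - (r - i) + (r - k))) := by
              rw [map_sum]
              exact Finset.sum_congr rfl fun a _ => (map_pow ι a _).symm
            rw [hmap]
            by_cases hki : k = i
            · subst hki
              rw [if_pos rfl, show q - 1 - (r - k) + (r - k) = Fintype.card 𝔽 - 1 by omega,
                aux_psum_top, map_neg, map_one]
            · rw [if_neg hki]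
              rcases Nat.eq_zero_or_pos (q - 1 - (r - i) + (r - k)) with hM | hM
              · rw [hM]
                simp only [pow_zero]
                rw [Finset.sum_const, Finset.card_univ, nsmul_one, hF]
                have : ((q : ℕ) : 𝔽) = 0 := by
                  rw [← hcard]; exact FiniteField.cast_card_eq_zero 𝔽
                rw [this, map_zero]
              · rw [aux_psum_zero 𝔽 hM (by omega) (by omega), map_zero]
          rw [hsum]
          split_ifs with hki
          · subst hki; rw [neg_one_mul, neg_smul]
          · rw [zero_mul, zero_smul]
        rw [Finset.sum_congr rfl step2, Finset.sum_ite_eq' (Finset.range (r + 1)) i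
          (fun _ => (-(r.choose i : K)) • (X 0 ^ i * X 1 ^ (r - i) : MvPolynomial (Fin 2) K)),
          if_pos (Finset.mem_range.mpr (by omega))]
      have hmem : ∑ a : 𝔽, (ι a) ^ (q - 1 - (r - i)) •
            ((X 0 + MvPolynomial.C (ι a) * X 1 : MvPolynomial (Fin 2) K) ^ r) ∈
          Submodule.span K {P : MvPolynomial (Fin 2) K |
            ∃ a : 𝔽, P = (X 0 + MvPolynomial.C (ι a) * X 1) ^ r} :=
        Submodule.sum_mem _ fun a _ =>
          Submodule.smul_mem _ _ (Submodule.subset_span ⟨a, rfl⟩)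
      rw [key] at hmem
      have hfin := Submodule.smul_mem _ (-(r.choose i : K))⁻¹ hmem
      rwa [smul_smul, inv_mul_cancel₀ (neg_ne_zero.mpr hchoose), one_smul] at hfin
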